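/- For all s ≥ 1 the following two-sided bound holds: q(1)·e^{3a·q(1)} / ( s^{3μ}·exp(3μ + (3μ/s)·√(3A/(1 + 3aA))) ) < q(s)·e^{3a·q(s)} ≤ A·e^{3A(1+a)} / ( s^{3μ}·exp(3μ - (3μ/s)·√(3A/(1 + 3aA))) ). -/

import Mathlib

open MeasureTheory Filter Real

set_option maxHeartbeats 2000000 in
theorem stmt_17 (a μ A : ℝ) (ha : 0 < a) (hμ : 1 / 3 < μ) (hA : 0 < A)
    (q : ℝ → ℝ) (hq : ContDiff ℝ 2 q)
    (hode : ∀ s : ℝ, deriv (deriv q) s * q s + a * s * deriv q s * q s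
      + μ * q s + (1 / 3) * s * deriv q s = 0)
    (hq0 : q 0 = A) (hq0' : deriv q 0 = 0)
    (hpos : ∀ s : ℝ, 0 < q s)
    (heven : ∀ s : ℝ, q (-s) = q s)
    (hanti : StrictAntiOn q (Set.Ioi 0))
    (hlim : Tendsto q atTop (nhds 0)) (hlim' : Tendsto (deriv q) atTop (nhds 0))
    (hint : Integrable q) :
    ∀ s : ℝ, 1 ≤ s →
      q 1 * Real.exp (3 * a * q 1)
          / (s ^ (3 * μ) * Real.exp (3 * μ + (3 * μ / s) * Real.sqrt (3 * A / (1 + 3 * a * A))))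
        < q s * Real.exp (3 * a * q s) ∧
      q s * Real.exp (3 * a * q s)
        ≤ A * Real.exp (3 * A * (1 + a))
          / (s ^ (3 * μ) * Real.exp (3 * μ - (3 * μ / s) * Real.sqrt (3 * A / (1 + 3 * a * A)))) := by
  have hμ0 : (0:ℝ) < μ := lt_trans (by norm_num) hμ
  set K : ℝ := Real.sqrt (3 * A / (1 + 3 * a * A)) with hKdef
  have hden : (0:ℝ) < 1 + 3 * a * A := by positivity
  have hK0 : 0 < K := Real.sqrt_pos.mpr (by positivity)
  have hK2 : K ^ 2 * (1 + 3 * a * A) = 3 * A := by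
    rw [hKdef, Real.sq_sqrt (by positivity)]
    field_simp
  -- basic regularity
  have hqdiff : Differentiable ℝ q := hq.differentiable two_ne_zero
  have h2 : ContDiff ℝ 1 (deriv q) := by
    have h21 : ContDiff ℝ (1 + 1) q := by exact_mod_cast hq
    exact (contDiff_succ_iff_deriv.mp h21).2.2
  have hq'diff : Differentiable ℝ (deriv q) := h2.differentiable one_ne_zero
  have hq''c : Continuous (deriv (deriv q)) := h2.continuous_deriv le_rfl
  have hqc : Continuous q := hqdiff.continuous
  have hq'c : Continuous (deriv q) := hq'diff.continuous
  have hqne : ∀ t, q t ≠ 0 := fun t => (hpos t).ne'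
  -- q ≤ A on [0,∞)
  have qleA : ∀ t : ℝ, 0 ≤ t → q t ≤ A := by
    intro t ht
    rcases eq_or_lt_of_le ht with h | h
    · rw [← h, hq0]
    · have htend : Tendsto q (nhdsWithin 0 (Set.Ioi 0)) (nhds A) := by
        have h1 := hqc.tendsto 0
        rw [hq0] at h1
        exact h1.mono_left nhdsWithin_le_nhds
      refine ge_of_tendsto htend ?_
      filter_upwards [Ioo_mem_nhdsGT_of_mem (Set.left_mem_Ico.mpr h)] with x hx
      exact (hanti hx.1 h hx.2).le
  -- q' ≤ 0 on [0,∞)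
  have hq'np : ∀ t : ℝ, 0 ≤ t → deriv q t ≤ 0 := by
    intro t ht
    rcases eq_or_lt_of_le ht with h | h
    · rw [← h, hq0']
    · have hd : Tendsto (slope q t) (nhdsWithin t (Set.Ioi t)) (nhds (deriv q t)) :=
        (hasDerivAt_iff_tendsto_slope.mp (hqdiff t).hasDerivAt).mono_left
          (nhdsWithin_mono t fun x hx => ne_of_gt hx)
      refine le_of_tendsto hd ?_
      filter_upwards [self_mem_nhdsWithin] with x hx
      have hqx : q x < q t := hanti h (lt_trans h hx) hx
      have hxt : 0 < x - t := by simp only [Set.mem_Ioi] at hx; linarith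
      simp only [slope_def_field]
      rw [div_eq_mul_inv]
      apply mul_nonpos_of_nonpos_of_nonneg (by linarith) (inv_nonneg.mpr hxt.le)
  -- q'' ≥ -μ on [0,∞)
  have hq''ge : ∀ t : ℝ, 0 ≤ t → -μ ≤ deriv (deriv q) t := by
    intro t ht
    have h := hode t
    have hv : 0 ≤ -(deriv q t) := neg_nonneg.mpr (hq'np t ht)
    have h1 : 0 ≤ a * t * (-(deriv q t)) * q t :=
      mul_nonneg (mul_nonneg (mul_nonneg ha.le ht) hv) (hpos t).le
    have h2 : 0 ≤ t * (-(deriv q t)) := mul_nonneg ht hv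
    nlinarith [hpos t]
  -- -μ t ≤ q' t on [0,∞)
  have hlinb : ∀ t : ℝ, 0 ≤ t → -(μ * t) ≤ deriv q t := by
    have hgd : ∀ x : ℝ, HasDerivAt (fun y => μ * y + deriv q y) (μ + deriv (deriv q) x) x := by
      intro x
      have := ((hasDerivAt_id x).const_mul μ).add (hq'diff x).hasDerivAt
      exact this.congr_deriv (by ring)
    have hmono : MonotoneOn (fun y => μ * y + deriv q y) (Set.Ici (0:ℝ)) := by
      apply monotoneOn_of_deriv_nonneg (convex_Ici 0)
      · exact ((continuous_const.mul continuous_id).add hq'c).continuousOn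
      · intro x _
        exact ((hgd x).differentiableAt).differentiableWithinAt
      · intro x hx
        rw [interior_Ici] at hx
        rw [(hgd x).deriv]
        linarith [hq''ge x (le_of_lt hx)]
    intro t ht
    have := hmono Set.self_mem_Ici ht ht
    simp only [mul_zero, zero_add, hq0'] at this
    linarith
  -- global bound -q' ≤ μ K
  have hKb : ∀ t : ℝ, 0 ≤ t → -(μ * K) ≤ deriv q t := by
    by_contra hcon
    push_neg at hcon
    obtain ⟨t₀, ht₀, hlt⟩ := hcon
    have hμK : 0 < μ * K := by positivity
    have hvlim : Tendsto (fun x => -(deriv q x)) atTop (nhds 0) := by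
      have := hlim'.neg; rwa [neg_zero] at this
    have hev : ∀ᶠ x in atTop, -(deriv q x) < μ * K :=
      Tendsto.eventually_lt_const hμK hvlim
    obtain ⟨T, hT⟩ := eventually_atTop.mp hev
    set T' := max T t₀ with hT'def
    have hT'0 : (0:ℝ) ≤ T' := le_trans ht₀ (le_max_right _ _)
    obtain ⟨sm, hsmem, hsmax⟩ :=
      isCompact_Icc.exists_isMaxOn (Set.nonempty_Icc.mpr hT'0) (hq'c.neg.continuousOn :
        ContinuousOn (fun x => -(deriv q x)) (Set.Icc 0 T'))
    have h1' : μ * K < -(deriv q t₀) := by linarith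
    have h1 : μ * K < -(deriv q sm) :=
      lt_of_lt_of_le h1' (hsmax ⟨ht₀, le_max_right T t₀⟩)
    have hs0 : 0 < sm := by
      rcases eq_or_lt_of_le hsmem.1 with h | h
      · exfalso; rw [← h] at h1; rw [hq0'] at h1; simp at h1; linarith
      · exact h
    have hsT : sm < T' := by
      rcases eq_or_lt_of_le hsmem.2 with h | h
      · exfalso
        have := hT T' (le_max_left _ _)
        rw [h] at h1
        linarith
      · exact h
    have hloc : IsLocalMax (fun x => -(deriv q x)) sm :=
      hsmax.isLocalMax (Icc_mem_nhds hs0 hsT)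
    have hd0 : deriv (deriv q) sm = 0 := by
      have h := hloc.deriv_eq_zero
      rw [show (fun x => -(deriv q x)) = -deriv q from rfl, deriv.neg] at h
      linarith [h]
    have hodes := hode sm
    rw [hd0] at hodes
    have hq'b : -(μ * sm) ≤ deriv q sm := hlinb sm hs0.le
    have hqA : q sm ≤ A := qleA sm hs0.le
    have hQ : 0 < q sm := hpos sm
    have e1 : (-(deriv q sm)) * sm * (3 * a * q sm + 1) = 3 * μ * q sm := by
      linear_combination (-3 : ℝ) * hodes
    have hpos2 : (0:ℝ) < 3 * a * q sm + 1 := by positivity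
    have e2 : 3 * (q sm) * (1 + 3 * a * A) ≤ 3 * A * (1 + 3 * a * (q sm)) := by nlinarith
    have e2' : μ * (3 * (q sm) * (1 + 3 * a * A)) ≤ μ * (3 * A * (1 + 3 * a * (q sm))) :=
      mul_le_mul_of_nonneg_left e2 hμ0.le
    have e4a : (-(deriv q sm)) * sm * ((3 * a * q sm + 1) * (1 + 3 * a * A)) =
        μ * (3 * (q sm) * (1 + 3 * a * A)) := by
      linear_combination (1 + 3 * a * A) * e1
    have e4b : μ * (3 * A * (1 + 3 * a * (q sm))) =
        μ * K ^ 2 * ((3 * a * q sm + 1) * (1 + 3 * a * A)) := by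
      linear_combination (-(μ * (1 + 3 * a * q sm))) * hK2
    have e4 : (-(deriv q sm)) * sm * ((3 * a * q sm + 1) * (1 + 3 * a * A)) ≤
        μ * K ^ 2 * ((3 * a * q sm + 1) * (1 + 3 * a * A)) := by
      calc (-(deriv q sm)) * sm * ((3 * a * q sm + 1) * (1 + 3 * a * A))
          = μ * (3 * (q sm) * (1 + 3 * a * A)) := e4a
        _ ≤ μ * (3 * A * (1 + 3 * a * (q sm))) := e2'
        _ = μ * K ^ 2 * ((3 * a * q sm + 1) * (1 + 3 * a * A)) := e4b
    have e3 : (-(deriv q sm)) * sm ≤ μ * K ^ 2 :=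
      le_of_mul_le_mul_right e4 (mul_pos hpos2 hden)
    have hw : 0 < -(deriv q sm) := lt_trans hμK h1
    have hw2 : -(deriv q sm) ≤ μ * sm := by linarith
    have s1 := mul_le_mul_of_nonneg_right e3 hw.le
    have s2 : μ * K ^ 2 * (-(deriv q sm)) ≤ μ * K ^ 2 * (μ * sm) :=
      mul_le_mul_of_nonneg_left hw2 (by positivity)
    have s3 : (-(deriv q sm)) ^ 2 * sm ≤ (μ * K) ^ 2 * sm := by nlinarith [s1, s2]
    have s4 : (-(deriv q sm)) ^ 2 ≤ (μ * K) ^ 2 := le_of_mul_le_mul_right s3 hs0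
    have hfin : (μ * K) ^ 2 < (-(deriv q sm)) ^ 2 := by
      have := mul_self_lt_mul_self hμK.le h1
      simpa [pow_two] using this
    linarith
  -- logarithmic derivative
  have hlogd : ∀ t : ℝ, HasDerivAt (fun x => Real.log (q x)) (deriv q t / q t) t := by
    intro t
    have := (Real.hasDerivAt_log (hqne t)).comp t (hqdiff t).hasDerivAt
    rw [div_eq_inv_mul]; exact this
  have hlogc : Continuous fun t => Real.log (q t) := by
    refine continuous_iff_continuousAt.mpr fun t => ?_
    exact (Real.continuousAt_log (hqne t)).comp hqc.continuousAt
  -- Identity over [0,1]:  q'(1) + a q(1) + μ + log(q 1)/3 ≤ a A + log A / 3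
  have key2 : deriv q 1 + a * q 1 + μ + Real.log (q 1) / 3 ≤ a * A + Real.log A / 3 := by
    set F2' : ℝ → ℝ := fun t =>
      deriv (deriv q) t + a * (q t + t * deriv q t) + μ +
        (Real.log (q t) / 3 + t / 3 * (deriv q t / q t)) with hF2'def
    have hF2 : ∀ t : ℝ, HasDerivAt
        (fun x => deriv q x + a * (x * q x) + μ * x + x / 3 * Real.log (q x)) (F2' t) t := by
      intro t
      have hbig := (((hq'diff t).hasDerivAt.add
          (((hasDerivAt_id t).mul (hqdiff t).hasDerivAt).const_mul a)).add
          ((hasDerivAt_id t).const_mul μ)).add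
          (((hasDerivAt_id t).div_const 3).mul (hlogd t))
      refine hbig.congr_deriv ?_
      simp [hF2'def]
      ring
    have hF2'c : Continuous F2' := by
      refine ((hq''c.add (continuous_const.mul (hqc.add (continuous_id.mul hq'c)))).add
        continuous_const).add ((hlogc.div_const 3).add
          ((continuous_id.div_const 3).mul (hq'c.div hqc hqne)))
    have hint2 : ∫ t in (0:ℝ)..1, F2' t =
        (deriv q 1 + a * (1 * q 1) + μ * 1 + 1 / 3 * Real.log (q 1)) -
        (deriv q 0 + a * (0 * q 0) + μ * 0 + 0 / 3 * Real.log (q 0)) :=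
      intervalIntegral.integral_eq_sub_of_hasDerivAt (fun t _ => hF2 t)
        (hF2'c.intervalIntegrable 0 1)
    have hcongr : ∫ t in (0:ℝ)..1, F2' t =
        ∫ t in (0:ℝ)..1, (a * q t + Real.log (q t) / 3) := by
      apply intervalIntegral.integral_congr
      intro t _
      have h := hode t
      have hqt := hqne t
      simp only [hF2'def]
      have h' : deriv (deriv q) t + a * t * deriv q t + μ + t / 3 * (deriv q t / q t) = 0 := by
        field_simp
        linear_combination (3 : ℝ) * h
      linarith [h']
    have hmono2 : ∫ t in (0:ℝ)..1, (a * q t + Real.log (q t) / 3) ≤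
        ∫ t in (0:ℝ)..1, (a * A + Real.log A / 3) := by
      apply intervalIntegral.integral_mono_on (by norm_num)
      · exact ((continuous_const.mul hqc).add (hlogc.div_const 3)).intervalIntegrable 0 1
      · exact intervalIntegrable_const
      · intro t ht
        have hqA := qleA t ht.1
        have hlog : Real.log (q t) ≤ Real.log A := (Real.log_le_log_iff (hpos t) hA).mpr hqA
        have := mul_le_mul_of_nonneg_left hqA ha.le
        linarith
    rw [hcongr] at hint2
    rw [hint2] at hmono2
    simp only [intervalIntegral.integral_const, smul_eq_mul, sub_zero, mul_one, hq0'] at hmono2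
    norm_num at hmono2
    linarith
  -- main part
  intro s hs
  have hs0 : (0:ℝ) < s := lt_of_lt_of_le one_pos hs
  set u' : ℝ → ℝ := fun t => deriv q t / q t + 3 * a * deriv q t with hu'def
  have hu : ∀ t : ℝ, HasDerivAt (fun x => Real.log (q x) + 3 * a * q x) (u' t) t := by
    intro t
    exact (hlogd t).add ((hqdiff t).hasDerivAt.const_mul (3 * a))
  have hu'c : Continuous u' := (hq'c.div hqc hqne).add (continuous_const.mul hq'c)
  have hFTC : ∫ t in (1:ℝ)..s, u' t =
      (Real.log (q s) + 3 * a * q s) - (Real.log (q 1) + 3 * a * q 1) :=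
    intervalIntegral.integral_eq_sub_of_hasDerivAt (fun t _ => hu t)
      (hu'c.intervalIntegrable 1 s)
  have huIcc : Set.uIcc (1:ℝ) s = Set.Icc 1 s := Set.uIcc_of_le hs
  have hcongr2 : ∫ t in (1:ℝ)..s, u' t =
      ∫ t in (1:ℝ)..s, (-(3 * μ) / t - 3 * deriv (deriv q) t / t) := by
    apply intervalIntegral.integral_congr
    intro t ht
    rw [huIcc] at ht
    have ht0 : (0:ℝ) < t := lt_of_lt_of_le one_pos ht.1
    have h := hode t
    have hqt := hqne t
    simp only [hu'def]
    field_simp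
    linear_combination (3 : ℝ) * h
  set I : ℝ := ∫ t in (1:ℝ)..s, deriv (deriv q) t / t with hIdef
  have hint_q'' : IntervalIntegrable (fun t => deriv (deriv q) t / t) volume 1 s := by
    apply ContinuousOn.intervalIntegrable
    apply (hq''c.continuousOn).div continuousOn_id
    intro t ht
    rw [huIcc] at ht
    exact ne_of_gt (lt_of_lt_of_le one_pos ht.1)
  have hsplit : ∫ t in (1:ℝ)..s, (-(3 * μ) / t - 3 * deriv (deriv q) t / t)
      = -(3 * μ) * Real.log s - 3 * I := by
    have hint1 : IntervalIntegrable (fun t : ℝ => -(3 * μ) / t) volume 1 s := by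
      apply ContinuousOn.intervalIntegrable
      apply continuousOn_const.div continuousOn_id
      intro t ht
      rw [huIcc] at ht
      exact ne_of_gt (lt_of_lt_of_le one_pos ht.1)
    rw [intervalIntegral.integral_sub hint1 (by
      simpa [mul_div_assoc] using hint_q''.const_mul 3)]
    congr 1
    · have : ∫ t in (1:ℝ)..s, -(3 * μ) / t = -(3 * μ) * ∫ t in (1:ℝ)..s, 1 / t := by
        rw [← intervalIntegral.integral_const_mul]
        congr 1; ext t; ring
      rw [this, integral_one_div (by rw [huIcc]; intro h; linarith [h.1] : (0:ℝ) ∉ Set.uIcc 1 s)]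
      norm_num
    · rw [← intervalIntegral.integral_const_mul]
      congr 1; ext t; ring
  -- integration by parts for I
  set J : ℝ := ∫ t in (1:ℝ)..s, (t ^ 2)⁻¹ * deriv q t with hJdef
  have hIBP : I = s⁻¹ * deriv q s - deriv q 1 + J := by
    have h1 : ∀ t ∈ Set.uIcc (1:ℝ) s, HasDerivAt (fun x : ℝ => x⁻¹) (-(t ^ 2)⁻¹) t := by
      intro t ht
      rw [huIcc] at ht
      exact hasDerivAt_inv (ne_of_gt (lt_of_lt_of_le one_pos ht.1))
    have h2 : ∀ t ∈ Set.uIcc (1:ℝ) s, HasDerivAt (deriv q) (deriv (deriv q) t) t :=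
      fun t _ => (hq'diff t).hasDerivAt
    have h3 : IntervalIntegrable (fun t : ℝ => -(t ^ 2)⁻¹) volume 1 s := by
      apply ContinuousOn.intervalIntegrable
      apply ContinuousOn.neg
      apply ContinuousOn.inv₀ (continuousOn_id.pow 2)
      intro t ht
      rw [huIcc] at ht
      have ht1 : (0:ℝ) < t := lt_of_lt_of_le one_pos ht.1
      exact pow_ne_zero 2 ht1.ne'
    have h4 : IntervalIntegrable (fun t => deriv (deriv q) t) volume 1 s :=
      hq''c.intervalIntegrable 1 s
    have := intervalIntegral.integral_mul_deriv_eq_deriv_mul h1 h2 (by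
      simpa [div_eq_mul_inv] using h3) h4
    have heqI : I = ∫ t in (1:ℝ)..s, t⁻¹ * deriv (deriv q) t := by
      rw [hIdef]; congr 1; ext t; rw [div_eq_inv_mul]
    rw [heqI, this]
    have : ∫ t in (1:ℝ)..s, -(t ^ 2)⁻¹ * deriv q t =
        -∫ t in (1:ℝ)..s, (t ^ 2)⁻¹ * deriv q t := by
      rw [← intervalIntegral.integral_neg]; congr 1; ext t; ring
    rw [this, ← hJdef]
    ring
  have hintJ : IntervalIntegrable (fun t : ℝ => (t ^ 2)⁻¹ * deriv q t) volume 1 s := by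
    apply ContinuousOn.intervalIntegrable
    apply ContinuousOn.mul ?_ hq'c.continuousOn
    apply ContinuousOn.inv₀ (continuousOn_id.pow 2)
    intro t ht
    rw [huIcc] at ht
    have := lt_of_lt_of_le one_pos ht.1
    exact pow_ne_zero 2 this.ne'
  have hJ0 : J ≤ 0 := by
    rw [hJdef]
    have h0 : (∫ t in (1:ℝ)..s, (0:ℝ)) = 0 := by simp
    rw [← h0]
    apply intervalIntegral.integral_mono_on hs hintJ intervalIntegrable_const
    intro t ht
    have ht0 : (0:ℝ) ≤ t := by linarith [ht.1]
    exact mul_nonpos_of_nonneg_of_nonpos (by positivity) (hq'np t ht0)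
  have hJ1 : q s - q 1 ≤ J := by
    have hqint : ∫ t in (1:ℝ)..s, deriv q t = q s - q 1 :=
      intervalIntegral.integral_eq_sub_of_hasDerivAt (fun t _ => (hqdiff t).hasDerivAt)
        (hq'c.intervalIntegrable 1 s)
    rw [hJdef, ← hqint]
    apply intervalIntegral.integral_mono_on hs (hq'c.intervalIntegrable 1 s) hintJ
    intro t ht
    have ht1 : (1:ℝ) ≤ t := ht.1
    have ht0 : (0:ℝ) ≤ t := by linarith
    have hinv : (t ^ 2)⁻¹ ≤ 1 := by
      rw [inv_le_one_iff₀]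
      right; nlinarith
    nlinarith [hq'np t ht0]
  -- the main identity
  have hmain : Real.log (q s) + 3 * a * q s =
      Real.log (q 1) + 3 * a * q 1 - 3 * μ * Real.log s - 3 * I := by
    rw [hcongr2, hsplit] at hFTC
    linarith
  -- bounds on I
  have hI_le : I ≤ μ := by
    have h1 : s⁻¹ * deriv q s ≤ 0 :=
      mul_nonpos_of_nonneg_of_nonpos (inv_nonneg.mpr hs0.le) (hq'np s hs0.le)
    have h2 : -(μ * 1) ≤ deriv q 1 := hlinb 1 zero_le_one
    rw [hIBP]
    linarith
  have hI_ge : -(μ * K) / s - deriv q 1 + (q s - q 1) ≤ I := by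
    have h2 : -(μ * K) ≤ deriv q s := hKb s hs0.le
    have h3 : s⁻¹ * -(μ * K) ≤ s⁻¹ * deriv q s :=
      mul_le_mul_of_nonneg_left h2 (inv_nonneg.mpr hs0.le)
    have h4 : -(μ * K) / s = s⁻¹ * -(μ * K) := by ring
    rw [hIBP, h4]
    linarith
  -- final exponent inequalities
  have hbridge1 : 3 * ((μ * K) / s) = (3 * μ / s) * K := by ring
  have hlow : Real.log (q 1) + 3 * a * q 1 - 3 * μ * Real.log s -
      (3 * μ + (3 * μ / s) * K) < Real.log (q s) + 3 * a * q s := by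
    have hpos' : 0 < (3 * μ / s) * K := by positivity
    rw [hmain]
    linarith
  have hupp : Real.log (q s) + 3 * a * q s ≤
      Real.log A + 3 * A * (1 + a) - 3 * μ * Real.log s - (3 * μ - (3 * μ / s) * K) := by
    have hq1A : q 1 ≤ A := qleA 1 zero_le_one
    have hqs : 0 < q s := hpos s
    rw [hmain]
    have := hI_ge
    have hKdiv : -(μ * K) / s = -((μ * K) / s) := by ring
    rw [hKdiv] at this
    linarith
  -- convert to the goal
  have e_s : q s * Real.exp (3 * a * q s) = Real.exp (Real.log (q s) + 3 * a * q s) := by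
    rw [Real.exp_add, Real.exp_log (hpos s)]
  have e_1 : q 1 * Real.exp (3 * a * q 1) = Real.exp (Real.log (q 1) + 3 * a * q 1) := by
    rw [Real.exp_add, Real.exp_log (hpos 1)]
  have e_A : A * Real.exp (3 * A * (1 + a)) = Real.exp (Real.log A + 3 * A * (1 + a)) := by
    rw [Real.exp_add, Real.exp_log hA]
  have e_pow : s ^ (3 * μ) = Real.exp (3 * μ * Real.log s) := by
    rw [Real.rpow_def_of_pos hs0, mul_comm]
  constructor
  · rw [e_s, e_1, e_pow, ← Real.exp_add, div_lt_iff₀ (Real.exp_pos _), ← Real.exp_add]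
    exact Real.exp_lt_exp.mpr (by linarith)
  · rw [e_s, e_A, e_pow, ← Real.exp_add, le_div_iff₀ (Real.exp_pos _), ← Real.exp_add]
    exact Real.exp_le_exp.mpr (by linarith)
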